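/- If ψ : ℝⁿ → ℂ is a negative definite function with ψ(0) = 0, then the square root of its modulus is subadditive: for all ξ, η ∈ ℝⁿ, √|ψ(ξ+η)| ≤ √|ψ(ξ)| + √|ψ(η)|. -/

import Mathlib

/-- `ψ` is negative definite in the sense of Schoenberg: `ψ 0` is a nonnegative real
and for every finite family `ξ₁, …, ξ_m` the matrix
`(ψ (ξ j) + conj (ψ (ξ k)) - ψ (ξ j - ξ k))` is positive semidefinite. -/
def IsNegativeDefinite {E : Type*} [AddGroup E] (ψ : E → ℂ) : Prop :=
  0 ≤ (ψ 0).re ∧ (ψ 0).im = 0 ∧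
  ∀ (m : ℕ) (ξ : Fin m → E) (c : Fin m → ℂ),
    0 ≤ (∑ j, ∑ k,
        (ψ (ξ j) + (starRingEnd ℂ) (ψ (ξ k)) - ψ (ξ j - ξ k)) * c j * (starRingEnd ℂ) (c k)).re ∧
    (∑ j, ∑ k,
        (ψ (ξ j) + (starRingEnd ℂ) (ψ (ξ k)) - ψ (ξ j - ξ k)) * c j * (starRingEnd ℂ) (c k)).im = 0

theorem keyid (ψξ ψη ψs D : ℂ) (t : ℝ) (hD : D = ψξ + ψη - ψs) (hD0 : D ≠ 0) :
    ((ψξ + (starRingEnd ℂ) ψξ - 0) * t * (starRingEnd ℂ) t +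
      (ψξ + (starRingEnd ℂ) ((starRingEnd ℂ) ψη) - ψs) * t * (starRingEnd ℂ) (-D / ‖D‖) +
      (((starRingEnd ℂ) ψη + (starRingEnd ℂ) ψξ - (starRingEnd ℂ) ψs) * (-D / ‖D‖) * (starRingEnd ℂ) t +
        ((starRingEnd ℂ) ψη + (starRingEnd ℂ) ((starRingEnd ℂ) ψη) - 0) * (-D / ‖D‖) *
          (starRingEnd ℂ) (-D / ‖D‖)))
      = (((2*ψξ.re)*t^2 - 2*(‖D‖)*t + 2*ψη.re : ℝ) : ℂ) := by
  have hr : (‖D‖ : ℂ) ≠ 0 := by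
    simpa using (norm_ne_zero_iff.mpr hD0)
  have hDD : D * (starRingEnd ℂ) D = ((‖D‖ : ℂ))^2 := by
    rw [Complex.mul_conj]
    norm_cast
    exact (Complex.sq_norm D).symm
  have ha : ψξ + (starRingEnd ℂ) ψξ = ((2*ψξ.re : ℝ) : ℂ) := by
    rw [Complex.add_conj]
  have hb : (starRingEnd ℂ) ψη + (starRingEnd ℂ) ((starRingEnd ℂ) ψη) = ((2*ψη.re : ℝ) : ℂ) := by
    rw [Complex.conj_conj, add_comm, Complex.add_conj]
  have hDe : ψξ + (starRingEnd ℂ) ((starRingEnd ℂ) ψη) - ψs = D := by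
    rw [Complex.conj_conj, hD]
  have hDe' : (starRingEnd ℂ) ψη + (starRingEnd ℂ) ψξ - (starRingEnd ℂ) ψs = (starRingEnd ℂ) D := by
    rw [hD, map_sub, map_add]; ring
  rw [ha, hb, hDe, hDe']
  simp only [map_div₀, map_neg, Complex.conj_ofReal, Complex.conj_conj]
  push_cast
  field_simp
  linear_combination (-2*(t:ℂ)*(‖D‖:ℂ) + 2*(ψη.re:ℂ)) * hDD

theorem nd_conj {E : Type*} [AddCommGroup E] (ψ : E → ℂ) (hneg : IsNegativeDefinite ψ)
    (h0 : ψ 0 = 0) : ∀ x, ψ (-x) = (starRingEnd ℂ) (ψ x) := by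
  intro x
  have h1 := (hneg.2.2 2 ![0, x] ![1, 1]).2
  have h2 := (hneg.2.2 2 ![0, x] ![1, Complex.I]).2
  simp [Fin.sum_univ_two, h0, zero_sub, sub_zero, sub_self] at h1 h2
  apply Complex.ext <;> simp [Complex.conj_re, Complex.conj_im] <;> linarith

theorem nd_re_nonneg {E : Type*} [AddCommGroup E] (ψ : E → ℂ) (hneg : IsNegativeDefinite ψ)
    (h0 : ψ 0 = 0) : ∀ x, 0 ≤ (ψ x).re := by
  intro x
  have h := (hneg.2.2 1 (fun _ => x) (fun _ => 1)).1
  simp [Fin.sum_univ_one, h0, Complex.add_re, Complex.sub_re, Complex.conj_re] at h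
  linarith

/-- If `ψ : ℝⁿ → ℂ` is negative definite with `ψ 0 = 0`, then `√|ψ|` is subadditive. -/
theorem statement0 {n : ℕ} (ψ : EuclideanSpace ℝ (Fin n) → ℂ)
    (hneg : IsNegativeDefinite ψ) (h0 : ψ 0 = 0) :
    ∀ ξ η : EuclideanSpace ℝ (Fin n),
      Real.sqrt (‖ψ (ξ + η)‖) ≤
        Real.sqrt (‖ψ ξ‖) + Real.sqrt (‖ψ η‖) := by
  intro ξ η
  have hre := nd_re_nonneg ψ hneg h0
  have hconj := nd_conj ψ hneg h0
  set D : ℂ := ψ ξ + ψ η - ψ (ξ + η) with hD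
  -- Step 1: |D|^2 ≤ 4 (Re ψ ξ)(Re ψ η)
  have key : (‖D‖)^2 ≤ 4 * (ψ ξ).re * (ψ η).re := by
    by_cases hD0 : D = 0
    · rw [hD0, norm_zero]
      nlinarith [hre ξ, hre η]
    have quad : ∀ t : ℝ,
        0 ≤ (2*(ψ ξ).re) * (t*t) + (-(2*(‖D‖))) * t + 2*(ψ η).re := by
      intro t
      have h := (hneg.2.2 2 ![ξ, -η] ![(t:ℂ), -D / ‖D‖]).1
      simp only [Fin.sum_univ_two, Matrix.cons_val_zero, Matrix.cons_val_one, Matrix.head_cons,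
        sub_self, sub_neg_eq_add, h0] at h
      rw [show -η - ξ = -(ξ + η) by abel,
        show (-η + η : EuclideanSpace ℝ (Fin n)) = 0 by abel, h0,
        hconj η, hconj (ξ + η)] at h
      rw [keyid (ψ ξ) (ψ η) (ψ (ξ + η)) D t hD hD0] at h
      rw [Complex.ofReal_re] at h
      nlinarith [h]
    have hdisc := discrim_le_zero quad
    rw [discrim] at hdisc
    nlinarith [hdisc]
  -- Step 2: conclude
  have habsD : ‖D‖ ≤ 2 * Real.sqrt (‖ψ ξ‖) * Real.sqrt (‖ψ η‖) := by
    have h1 : (ψ ξ).re ≤ ‖ψ ξ‖ := Complex.re_le_norm _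
    have h2 : (ψ η).re ≤ ‖ψ η‖ := Complex.re_le_norm _
    have h3 : (‖D‖)^2 ≤ 4 * ‖ψ ξ‖ * ‖ψ η‖ := by
      nlinarith [hre ξ, hre η, norm_nonneg (ψ ξ), norm_nonneg (ψ η)]
    have h4 : (2 * Real.sqrt (‖ψ ξ‖) * Real.sqrt (‖ψ η‖))^2
        = 4 * ‖ψ ξ‖ * ‖ψ η‖ := by
      rw [mul_pow, mul_pow, Real.sq_sqrt (norm_nonneg _), Real.sq_sqrt (norm_nonneg _)]
      ring
    have h5 : (‖D‖)^2 ≤ (2 * Real.sqrt (‖ψ ξ‖) * Real.sqrt (‖ψ η‖))^2 := by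
      rw [h4]; exact h3
    calc ‖D‖ = Real.sqrt ((‖D‖)^2) := (Real.sqrt_sq (norm_nonneg D)).symm
      _ ≤ Real.sqrt ((2 * Real.sqrt (‖ψ ξ‖) * Real.sqrt (‖ψ η‖))^2) :=
          Real.sqrt_le_sqrt h5
      _ = 2 * Real.sqrt (‖ψ ξ‖) * Real.sqrt (‖ψ η‖) :=
          Real.sqrt_sq (by positivity)
  have hfinal : ‖ψ (ξ + η)‖ ≤
      (Real.sqrt (‖ψ ξ‖) + Real.sqrt (‖ψ η‖))^2 := by
    have htri : ‖ψ (ξ + η)‖ ≤ ‖ψ ξ‖ + ‖ψ η‖ + ‖D‖ := by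
      have : ψ (ξ + η) = ψ ξ + ψ η - D := by rw [hD]; ring
      rw [this]
      calc ‖ψ ξ + ψ η - D‖ ≤ ‖ψ ξ + ψ η‖ + ‖D‖ :=
            norm_sub_le _ _
        _ ≤ ‖ψ ξ‖ + ‖ψ η‖ + ‖D‖ := by
            have := norm_add_le (ψ ξ) (ψ η); linarith
    have hsq1 : Real.sqrt (‖ψ ξ‖)^2 = ‖ψ ξ‖ :=
      Real.sq_sqrt (norm_nonneg _)
    have hsq2 : Real.sqrt (‖ψ η‖)^2 = ‖ψ η‖ :=
      Real.sq_sqrt (norm_nonneg _)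
    nlinarith [habsD, htri]
  calc Real.sqrt (‖ψ (ξ + η)‖)
      ≤ Real.sqrt ((Real.sqrt (‖ψ ξ‖) + Real.sqrt (‖ψ η‖))^2) :=
        Real.sqrt_le_sqrt hfinal
    _ = Real.sqrt (‖ψ ξ‖) + Real.sqrt (‖ψ η‖) :=
        Real.sqrt_sq (by positivity)
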